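/- Minimal rank-deficiency perturbation of a vector-augmented matrix: if M : Matrix (Fin n) (Fin m) ℝ has full row rank n, then the minimum Frobenius norm of a perturbation Δ such that M + Δ has rank < n equals the smallest singular value of M; equivalently, min { ‖Δ‖_F : rank(M+Δ) < n } = σ_min(M) = min over unit vectors v of ‖vᵀ M‖₂. -/
import Mathlib

open Matrix in
private lemma aux_rank_lt_iff {n m : ℕ} (A : Matrix (Fin n) (Fin m) ℝ) :
    A.rank < n ↔ ∃ v : Fin n → ℝ, v ≠ 0 ∧ Matrix.vecMul v A = 0 := by
  rw [← Matrix.rank_transpose, Matrix.rank]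
  have h := LinearMap.finrank_range_add_finrank_ker (Aᵀ.mulVecLin)
  simp only [Module.finrank_fin_fun] at h
  constructor
  · intro hlt
    have : 0 < Module.finrank ℝ (LinearMap.ker Aᵀ.mulVecLin) := by omega
    rw [Module.finrank_pos_iff_exists_ne_zero] at this
    obtain ⟨⟨v, hv⟩, hv0⟩ := this
    refine ⟨v, ?_, ?_⟩
    · simpa [Submodule.mk_eq_zero] using hv0
    · simpa [Matrix.mulVec_transpose] using hv
  · rintro ⟨v, hv0, hv⟩
    have hker : 0 < Module.finrank ℝ (LinearMap.ker Aᵀ.mulVecLin) := by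
      rw [Module.finrank_pos_iff_exists_ne_zero]
      have hmem : v ∈ LinearMap.ker Aᵀ.mulVecLin := by
        simpa [LinearMap.mem_ker, Matrix.mulVec_transpose] using hv
      exact ⟨⟨v, hmem⟩, by simpa [Submodule.mk_eq_zero] using hv0⟩
    omega

private lemma aux_cs {n m : ℕ} (u : Fin n → ℝ) (hu : ∑ i, u i ^ 2 = 1)
    (Δ : Matrix (Fin n) (Fin m) ℝ) :
    ∑ j, (Matrix.vecMul u Δ j) ^ 2 ≤ ∑ i, ∑ j, Δ i j ^ 2 := by
  rw [Finset.sum_comm]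
  refine Finset.sum_le_sum fun j _ => ?_
  calc (Matrix.vecMul u Δ j) ^ 2 = (∑ i, u i * Δ i j) ^ 2 := by
        simp [Matrix.vecMul, dotProduct]
    _ ≤ (∑ i, u i ^ 2) * ∑ i, Δ i j ^ 2 :=
        Finset.sum_mul_sq_le_sq_mul_sq _ _ _
    _ = ∑ i, Δ i j ^ 2 := by rw [hu, one_mul]

/-- The minimal Frobenius-norm rank-deficiency perturbation of a full-row-rank
matrix equals the smallest singular value `min_{‖v‖=1} ‖vᵀM‖₂`. -/
theorem min_perturbation_eq_smallest_singular_value (n m : ℕ) (hnm : n ≤ m)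
    (M : Matrix (Fin n) (Fin m) ℝ) (hM : M.rank = n) :
    sInf {x : ℝ | ∃ Δ : Matrix (Fin n) (Fin m) ℝ,
        (M + Δ).rank < n ∧ x = Real.sqrt (∑ i, ∑ j, Δ i j ^ 2)} =
    sInf {x : ℝ | ∃ v : Fin n → ℝ, Real.sqrt (∑ i, v i ^ 2) = 1 ∧
        x = Real.sqrt (∑ j, (Matrix.vecMul v M j) ^ 2)} := by
  set S1 := {x : ℝ | ∃ Δ : Matrix (Fin n) (Fin m) ℝ,
      (M + Δ).rank < n ∧ x = Real.sqrt (∑ i, ∑ j, Δ i j ^ 2)} with hS1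
  set S2 := {x : ℝ | ∃ v : Fin n → ℝ, Real.sqrt (∑ i, v i ^ 2) = 1 ∧
      x = Real.sqrt (∑ j, (Matrix.vecMul v M j) ^ 2)} with hS2
  have hbdd1 : BddBelow S1 := ⟨0, by rintro x ⟨Δ, _, rfl⟩; exact Real.sqrt_nonneg _⟩
  have hbdd2 : BddBelow S2 := ⟨0, by rintro x ⟨v, _, rfl⟩; exact Real.sqrt_nonneg _⟩
  -- S2 ⊆ S1
  have hsub : S2 ⊆ S1 := by
    rintro x ⟨v, hv1, rfl⟩
    have hv2 : ∑ i, v i ^ 2 = 1 := Real.sqrt_eq_one.mp hv1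
    set w := Matrix.vecMul v M with hw
    refine ⟨Matrix.of fun i j => -(v i * w j), ?_, ?_⟩
    · rw [aux_rank_lt_iff]
      refine ⟨v, ?_, ?_⟩
      · intro h0
        rw [h0] at hv2; simp at hv2
      · funext j
        have e1 : Matrix.vecMul v (M + Matrix.of fun i j => -(v i * w j)) j
            = w j + ∑ i, v i * (-(v i * w j)) := by
          simp [Matrix.vecMul, dotProduct, Matrix.add_apply, mul_add,
            Finset.sum_add_distrib, hw]
        have e2 : ∑ i, v i * (-(v i * w j)) = -((∑ i, v i ^ 2) * w j) := by
          rw [Finset.sum_mul, ← Finset.sum_neg_distrib]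
          exact Finset.sum_congr rfl fun i _ => by ring
        rw [Pi.zero_apply, e1, e2, hv2, one_mul, add_neg_cancel]
    · congr 1
      refine (?_ : (∑ i, ∑ j, (Matrix.of fun i j => -(v i * w j)) i j ^ 2) = _).symm
      calc ∑ i, ∑ j, (Matrix.of fun i j => -(v i * w j)) i j ^ 2
          = ∑ i, v i ^ 2 * ∑ j, w j ^ 2 := by
            congr 1; funext i; rw [Finset.mul_sum]; congr 1; funext j
            simp [Matrix.of_apply]; ring
        _ = (∑ i, v i ^ 2) * ∑ j, w j ^ 2 := by rw [← Finset.sum_mul]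
        _ = ∑ j, w j ^ 2 := by rw [hv2, one_mul]
  by_cases hn : n = 0
  · subst hn
    have h1 : S1 = ∅ := by
      ext x; simp only [hS1, Set.mem_setOf_eq, Set.mem_empty_iff_false, iff_false]
      rintro ⟨Δ, h, _⟩; omega
    have h2 : S2 = ∅ := by
      ext x; simp only [hS2, Set.mem_setOf_eq, Set.mem_empty_iff_false, iff_false]
      rintro ⟨v, h, _⟩
      simp at h
    rw [h1, h2]
  · have hn' : 0 < n := Nat.pos_of_ne_zero hn
    -- S2 nonempty
    have hne2 : S2.Nonempty := by
      refine ⟨_, (fun i => if i = ⟨0, hn'⟩ then (1:ℝ) else 0), ?_, rfl⟩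
      have h : ∑ i, (if i = (⟨0, hn'⟩ : Fin n) then (1:ℝ) else 0) ^ 2 = 1 := by
        rw [Finset.sum_eq_single (⟨0, hn'⟩ : Fin n)]
        · simp
        · intro b _ hb; simp [hb]
        · simp
      rw [h, Real.sqrt_one]
    have hne1 : S1.Nonempty := hne2.mono hsub
    refine le_antisymm (csInf_le_csInf hbdd1 hne2 hsub) ?_
    refine le_csInf hne1 ?_
    rintro x ⟨Δ, hrk, rfl⟩
    obtain ⟨v, hv0, hv⟩ := (aux_rank_lt_iff _).mp hrk
    have hvpos : 0 < ∑ i, v i ^ 2 := by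
      rcases Function.ne_iff.mp hv0 with ⟨i, hi⟩
      have : (0:ℝ) < v i ^ 2 := lt_of_le_of_ne (sq_nonneg _) (Ne.symm (pow_ne_zero 2 hi))
      exact this.trans_le (Finset.single_le_sum (fun i _ => sq_nonneg (v i))
        (Finset.mem_univ i))
    set c : ℝ := (Real.sqrt (∑ i, v i ^ 2))⁻¹ with hc
    set u : Fin n → ℝ := c • v with hu
    have hu2 : ∑ i, u i ^ 2 = 1 := by
      have : ∑ i, (c • v) i ^ 2 = c ^ 2 * ∑ i, v i ^ 2 := by
        rw [Finset.mul_sum]; congr 1; funext i; simp [mul_pow]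
      rw [hu, this, hc, ← Real.sqrt_inv, Real.sq_sqrt (by positivity), inv_mul_cancel₀ hvpos.ne']
    -- vecMul u (M + Δ) = 0
    have huM : Matrix.vecMul u M = - Matrix.vecMul u Δ := by
      have h1 : Matrix.vecMul u (M + Δ) = 0 := by
        rw [hu, Matrix.smul_vecMul, hv, smul_zero]
      rw [Matrix.vecMul_add] at h1
      funext j
      have := congrFun h1 j
      simp only [Pi.add_apply, Pi.zero_apply, Pi.neg_apply] at this ⊢
      linarith
    have key : ∑ j, (Matrix.vecMul u M j) ^ 2 ≤ ∑ i, ∑ j, Δ i j ^ 2 := by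
      have : ∑ j, (Matrix.vecMul u M j) ^ 2 = ∑ j, (Matrix.vecMul u Δ j) ^ 2 := by
        congr 1; funext j; rw [huM]; simp [neg_pow]
      rw [this]
      exact aux_cs u hu2 Δ
    have hmem : Real.sqrt (∑ j, (Matrix.vecMul u M j) ^ 2) ∈ S2 := by
      refine ⟨u, ?_, rfl⟩
      rw [hu2, Real.sqrt_one]
    exact (csInf_le hbdd2 hmem).trans (Real.sqrt_le_sqrt key)
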